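/- arXiv:1505.00526 — 3 statements merged into one kernel-verified Lean document; each statement's English description precedes it below -/
import Mathlib

section
/- Let A ∈ ℝ^{m×n} be a matrix with SVD A = U·diag(Σ₁,Σ₂)·[V₁ᵀ; V₂ᵀ], where Σ₁ contains the top k singular values, and let Ω ∈ ℝ^{n×ℓ} be any matrix. Set Y = AΩ, Ω₁ = V₁ᵀΩ, Ω₂ = V₂ᵀΩ. If Ω₁ has full row rank k, then ‖A − P_Y A‖₂² ≤ ‖Σ₂‖₂² + ‖Σ₂Ω₂Ω₁†‖₂², where P_Y = YY† is the orthogonal projection onto the column space of Y and Ω₁† is the Moore–Penrose pseudoinverse. -/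
open Matrix
open scoped Matrix.Norms.L2Operator

lemma euc_sq {ι : Type*} [Fintype ι] (v : EuclideanSpace ℝ ι) : ‖v‖ ^ 2 = ∑ i, v i ^ 2 := by
  rw [EuclideanSpace.norm_eq, Real.sq_sqrt (by positivity)]
  simp [sq_abs]

lemma opnorm_le {p q : Type*} [Fintype p] [Fintype q] [DecidableEq q]
    (M : Matrix p q ℝ) {c : ℝ} (hc : 0 ≤ c)
    (h : ∀ x : EuclideanSpace ℝ q, ‖(EuclideanSpace.equiv p ℝ).symm (M *ᵥ x)‖ ≤ c * ‖x‖) :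
    ‖M‖ ≤ c := by
  rw [Matrix.l2_opNorm_def]
  exact ContinuousLinearMap.opNorm_le_bound _ hc fun x => h x

lemma dot_sq {ι : Type*} [Fintype ι] (v : ι → ℝ) :
    ‖(EuclideanSpace.equiv ι ℝ).symm v‖ ^ 2 = v ⬝ᵥ v := by
  rw [euc_sq]; simp [dotProduct, sq]

lemma vm_tm {p q : Type*} [Fintype p] [Fintype q] (M : Matrix p q ℝ) (x : q → ℝ) :
    (M *ᵥ x) ⬝ᵥ (M *ᵥ x) = ((Mᵀ * M) *ᵥ x) ⬝ᵥ x := by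
  rw [Matrix.dotProduct_mulVec, ← Matrix.mulVec_mulVec]
  congr 1
  rw [Matrix.mulVec_transpose]

lemma ortho_norm {p q : Type*} [Fintype p] [Fintype q] [DecidableEq q]
    (M : Matrix p q ℝ) (h : Mᵀ * M = 1) (x : EuclideanSpace ℝ q) :
    ‖(EuclideanSpace.equiv p ℝ).symm (M *ᵥ x)‖ = ‖x‖ := by
  have h1 : ‖(EuclideanSpace.equiv p ℝ).symm (M *ᵥ x)‖ ^ 2 = ‖x‖ ^ 2 := by
    rw [dot_sq, vm_tm, h, Matrix.one_mulVec, ← dot_sq (ι := q) x]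
    rfl
  have h3 := congrArg Real.sqrt h1
  rwa [Real.sqrt_sq (norm_nonneg _), Real.sqrt_sq (norm_nonneg _)] at h3

lemma ortho_opnorm_le {p q : Type*} [Fintype p] [Fintype q] [DecidableEq q]
    (M : Matrix p q ℝ) (h : Mᵀ * M = 1) : ‖M‖ ≤ 1 :=
  opnorm_le M zero_le_one fun x => by rw [ortho_norm M h, one_mul]

lemma inner_eq_dot {ι : Type*} [Fintype ι] (a b : ι → ℝ) :
    (inner ℝ ((EuclideanSpace.equiv ι ℝ).symm a) ((EuclideanSpace.equiv ι ℝ).symm b) : ℝ)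
      = a ⬝ᵥ b := by
  simp [PiLp.inner_apply, RCLike.inner_apply, dotProduct, mul_comm]

lemma proj_opnorm_le {p : Type*} [Fintype p] [DecidableEq p]
    (R : Matrix p p ℝ) (hs : Rᵀ = R) (hi : R * R = R) : ‖R‖ ≤ 1 := by
  refine opnorm_le R zero_le_one fun x => ?_
  rw [one_mul]
  set v := (EuclideanSpace.equiv p ℝ).symm (R *ᵥ x) with hv
  have h1 : ‖v‖ ^ 2 = (R *ᵥ x) ⬝ᵥ x := by
    rw [hv, dot_sq, vm_tm, hs, hi]
  have h2 : (R *ᵥ x) ⬝ᵥ x ≤ ‖v‖ * ‖x‖ := by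
    have h3 := real_inner_le_norm v ((EuclideanSpace.equiv p ℝ).symm (x : p → ℝ))
    rwa [inner_eq_dot] at h3
  nlinarith [norm_nonneg v, norm_nonneg x]

lemma rank_isUnit {k : ℕ} (B : Matrix (Fin k) (Fin k) ℝ) (h : B.rank = k) : IsUnit B := by
  rw [← Matrix.mulVec_surjective_iff_isUnit]
  have ht : LinearMap.range B.mulVecLin = ⊤ := by
    apply Submodule.eq_top_of_finrank_eq
    rw [show Module.finrank ℝ (LinearMap.range B.mulVecLin) = B.rank from rfl, h,
      Module.finrank_fin_fun]
  intro y
  obtain ⟨x, hx⟩ := LinearMap.range_eq_top.mp ht y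
  exact ⟨x, hx⟩

set_option maxHeartbeats 2000000 in
/-- If `A = U·diag(σ)·Vᵀ` is an SVD with right singular blocks `V₁, V₂`,
`Y = AΩ`, `Ω₁ = V₁ᵀΩ`, `Ω₂ = V₂ᵀΩ`, `Ω₁` has full row rank `k`, and `P` is the orthogonal
projection onto the column space of `Y`, then
`‖A − P·A‖₂² ≤ ‖Σ₂‖₂² + ‖Σ₂·Ω₂·Ω₁†‖₂²`, where `Ω₁† = Ω₁ᵀ(Ω₁Ω₁ᵀ)⁻¹`. -/
theorem stmt_7 {m n k r ℓ : ℕ}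
    (U : Matrix (Fin m) (Fin k ⊕ Fin r) ℝ) (V : Matrix (Fin n) (Fin k ⊕ Fin r) ℝ)
    (σ : Fin k ⊕ Fin r → ℝ)
    (hU : Uᵀ * U = 1) (hV : Vᵀ * V = 1)
    (hσ : ∀ a, 0 ≤ σ a)
    (hord : ∀ (i : Fin k) (j : Fin r), σ (Sum.inr j) ≤ σ (Sum.inl i))
    (A : Matrix (Fin m) (Fin n) ℝ) (hA : A = U * Matrix.diagonal σ * Vᵀ)
    (Ω : Matrix (Fin n) (Fin ℓ) ℝ)
    (Ω₁ : Matrix (Fin k) (Fin ℓ) ℝ) (hΩ₁ : Ω₁ = (V.submatrix id Sum.inl)ᵀ * Ω)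
    (Ω₂ : Matrix (Fin r) (Fin ℓ) ℝ) (hΩ₂ : Ω₂ = (V.submatrix id Sum.inr)ᵀ * Ω)
    (hrank : Ω₁.rank = k)
    (P : Matrix (Fin m) (Fin m) ℝ)
    (hPsymm : Pᵀ = P) (hPidem : P * P = P)
    (hPY : P * (A * Ω) = A * Ω)
    (hPrange : ∃ B : Matrix (Fin ℓ) (Fin m) ℝ, P = (A * Ω) * B) :
    ‖A - P * A‖ ^ 2 ≤ ‖Matrix.diagonal (σ ∘ Sum.inr)‖ ^ 2
      + ‖Matrix.diagonal (σ ∘ Sum.inr) * Ω₂ * (Ω₁ᵀ * (Ω₁ * Ω₁ᵀ)⁻¹)‖ ^ 2 := by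
  classical
  set S1 : Matrix (Fin k) (Fin k) ℝ := Matrix.diagonal (σ ∘ Sum.inl) with hS1
  set S2 : Matrix (Fin r) (Fin r) ℝ := Matrix.diagonal (σ ∘ Sum.inr) with hS2
  set pinv : Matrix (Fin ℓ) (Fin k) ℝ := Ω₁ᵀ * (Ω₁ * Ω₁ᵀ)⁻¹ with hpinv
  set V₁ : Matrix (Fin n) (Fin k) ℝ := V.submatrix id Sum.inl with hV₁
  set V₂ : Matrix (Fin n) (Fin r) ℝ := V.submatrix id Sum.inr with hV₂
  set U₁ : Matrix (Fin m) (Fin k) ℝ := U.submatrix id Sum.inl with hU₁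
  set U₂ : Matrix (Fin m) (Fin r) ℝ := U.submatrix id Sum.inr with hU₂
  set Rm : Matrix (Fin m) (Fin m) ℝ := 1 - P with hRm
  -- invertibility of Ω₁ * Ω₁ᵀ
  have hdet : IsUnit (Ω₁ * Ω₁ᵀ).det := by
    apply (Matrix.isUnit_iff_isUnit_det _).mp
    exact rank_isUnit _ (by rw [Matrix.rank_self_mul_transpose, hrank])
  have h1 : Ω₁ * pinv = 1 := by
    rw [hpinv, ← Matrix.mul_assoc, Matrix.mul_nonsing_inv _ hdet]
  -- block decomposition of A
  have hsplit : A = U₁ * (S1 * V₁ᵀ) + U₂ * (S2 * V₂ᵀ) := by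
    rw [hA, Matrix.mul_assoc]
    ext i j
    simp [Matrix.mul_apply, Matrix.diagonal_apply, Fintype.sum_sum_type, hS1, hS2, hU₁, hU₂,
      hV₁, hV₂, Matrix.mul_assoc, Function.comp]
  -- U₂ has orthonormal columns
  have hU2 : U₂ᵀ * U₂ = 1 := by
    ext i j
    have := congrFun (congrFun hU (Sum.inr i)) (Sum.inr j)
    simpa [Matrix.mul_apply, Matrix.one_apply, hU₂] using this
  -- the key projection annihilation
  have h3 : Rm * (A * Ω) = 0 := by
    rw [hRm, Matrix.sub_mul, Matrix.one_mul, hPY, sub_self]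
  have h4 : A * (Ω * pinv) = U₁ * S1 + U₂ * (S2 * (Ω₂ * pinv)) := by
    calc A * (Ω * pinv)
        = (U₁ * (S1 * V₁ᵀ) + U₂ * (S2 * V₂ᵀ)) * (Ω * pinv) := by rw [← hsplit]
      _ = U₁ * (S1 * ((V₁ᵀ * Ω) * pinv)) + U₂ * (S2 * ((V₂ᵀ * Ω) * pinv)) := by
          simp only [Matrix.add_mul, Matrix.mul_assoc]
      _ = U₁ * S1 + U₂ * (S2 * (Ω₂ * pinv)) := by
          rw [← hΩ₁, ← hΩ₂, h1, Matrix.mul_one]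
  have h6 : Rm * (U₁ * S1) + Rm * (U₂ * (S2 * (Ω₂ * pinv))) = 0 := by
    have h5 : Rm * (A * (Ω * pinv)) = 0 := by
      rw [← Matrix.mul_assoc A, ← Matrix.mul_assoc Rm, ← Matrix.mul_assoc Rm, Matrix.mul_assoc Rm A,
        h3, Matrix.zero_mul]
    rw [h4, Matrix.mul_add] at h5
    exact h5
  have h7 : Rm * (U₁ * S1) = -(Rm * (U₂ * (S2 * (Ω₂ * pinv)))) := by
    rw [add_eq_zero_iff_eq_neg] at h6
    exact h6
  -- key identity
  have hkey : A - P * A = (Rm * U₂) * (S2 * V₂ᵀ - (S2 * Ω₂ * pinv) * V₁ᵀ) := by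
    calc A - P * A = Rm * A := by rw [hRm, Matrix.sub_mul, Matrix.one_mul]
      _ = Rm * (U₁ * (S1 * V₁ᵀ)) + Rm * (U₂ * (S2 * V₂ᵀ)) := by
          rw [hsplit, Matrix.mul_add]
      _ = (Rm * (U₁ * S1)) * V₁ᵀ + Rm * (U₂ * (S2 * V₂ᵀ)) := by
          simp only [Matrix.mul_assoc]
      _ = (-(Rm * (U₂ * (S2 * (Ω₂ * pinv))))) * V₁ᵀ + Rm * (U₂ * (S2 * V₂ᵀ)) := by rw [h7]
      _ = (Rm * U₂) * (S2 * V₂ᵀ - (S2 * Ω₂ * pinv) * V₁ᵀ) := by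
          simp only [Matrix.neg_mul, Matrix.mul_sub, Matrix.mul_assoc]
          abel
  -- norms
  set a : ℝ := ‖S2‖ with ha
  set b : ℝ := ‖S2 * Ω₂ * pinv‖ with hb
  have ha0 : 0 ≤ a := norm_nonneg _
  have hb0 : 0 ≤ b := norm_nonneg _
  set N : Matrix (Fin m) (Fin r) ℝ := Rm * U₂ with hN
  have hNle : ‖N‖ ≤ 1 := by
    have h8 := Matrix.l2_opNorm_mul Rm U₂
    have h9 : ‖Rm‖ ≤ 1 := proj_opnorm_le Rm (by rw [hRm, Matrix.transpose_sub, hPsymm]; simp)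
      (by rw [hRm]; simp [Matrix.mul_sub, Matrix.sub_mul, hPidem])
    have h10 : ‖U₂‖ ≤ 1 := ortho_opnorm_le U₂ hU2
    calc ‖N‖ ≤ ‖Rm‖ * ‖U₂‖ := h8
      _ ≤ 1 := by nlinarith [norm_nonneg Rm, norm_nonneg U₂]
  have hVt : ‖Vᵀ‖ ≤ 1 := by
    have hstar : Vᴴ = Vᵀ := by ext i j; simp [Matrix.conjTranspose_apply]
    rw [← hstar, Matrix.l2_opNorm_conjTranspose]
    exact ortho_opnorm_le V hV
  -- main bound
  have hbound : ‖A - P * A‖ ≤ Real.sqrt (a ^ 2 + b ^ 2) := by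
    apply opnorm_le _ (Real.sqrt_nonneg _)
    intro x
    rw [hkey, ← Matrix.mulVec_mulVec]
    set y₁ : Fin k → ℝ := V₁ᵀ *ᵥ x with hy₁
    set y₂ : Fin r → ℝ := V₂ᵀ *ᵥ x with hy₂
    set ey₁ : EuclideanSpace ℝ (Fin k) := (EuclideanSpace.equiv (Fin k) ℝ).symm y₁ with hey₁
    set ey₂ : EuclideanSpace ℝ (Fin r) := (EuclideanSpace.equiv (Fin r) ℝ).symm y₂ with hey₂
    have hG : (S2 * V₂ᵀ - (S2 * Ω₂ * pinv) * V₁ᵀ) *ᵥ x = S2 *ᵥ y₂ - (S2 * Ω₂ * pinv) *ᵥ y₁ := by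
      rw [Matrix.sub_mulVec, ← Matrix.mulVec_mulVec, ← Matrix.mulVec_mulVec]
    have hstep1 : ‖(EuclideanSpace.equiv (Fin r) ℝ).symm
        ((S2 * V₂ᵀ - (S2 * Ω₂ * pinv) * V₁ᵀ) *ᵥ x)‖ ≤ a * ‖ey₂‖ + b * ‖ey₁‖ := by
      rw [hG]
      calc ‖(EuclideanSpace.equiv (Fin r) ℝ).symm (S2 *ᵥ y₂ - (S2 * Ω₂ * pinv) *ᵥ y₁)‖
          ≤ ‖(EuclideanSpace.equiv (Fin r) ℝ).symm (S2 *ᵥ y₂)‖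
            + ‖(EuclideanSpace.equiv (Fin r) ℝ).symm ((S2 * Ω₂ * pinv) *ᵥ y₁)‖ :=
            by rw [map_sub]; exact norm_sub_le _ _
        _ ≤ a * ‖ey₂‖ + b * ‖ey₁‖ :=
            add_le_add (Matrix.l2_opNorm_mulVec S2 ey₂) (Matrix.l2_opNorm_mulVec _ ey₁)
    have hy : ‖ey₁‖ ^ 2 + ‖ey₂‖ ^ 2 ≤ ‖x‖ ^ 2 := by
      have h11 : ‖(EuclideanSpace.equiv (Fin k ⊕ Fin r) ℝ).symm (Vᵀ *ᵥ x)‖ ≤ ‖x‖ := by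
        calc ‖(EuclideanSpace.equiv (Fin k ⊕ Fin r) ℝ).symm (Vᵀ *ᵥ x)‖ ≤ ‖Vᵀ‖ * ‖x‖ :=
            Matrix.l2_opNorm_mulVec Vᵀ x
          _ ≤ ‖x‖ := by nlinarith [norm_nonneg x]
      have h12 : ‖ey₁‖ ^ 2 + ‖ey₂‖ ^ 2
          = ‖(EuclideanSpace.equiv (Fin k ⊕ Fin r) ℝ).symm (Vᵀ *ᵥ x)‖ ^ 2 := by
        rw [euc_sq, euc_sq, euc_sq, Fintype.sum_sum_type]
        rfl
      rw [h12]
      nlinarith [norm_nonneg ((EuclideanSpace.equiv (Fin k ⊕ Fin r) ℝ).symm (Vᵀ *ᵥ x)),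
        norm_nonneg x]
    have hstep2 : a * ‖ey₂‖ + b * ‖ey₁‖ ≤ Real.sqrt (a ^ 2 + b ^ 2) * ‖x‖ := by
      have hsq : (a * ‖ey₂‖ + b * ‖ey₁‖) ^ 2 ≤ (a ^ 2 + b ^ 2) * ‖x‖ ^ 2 := by
        nlinarith [sq_nonneg (a * ‖ey₁‖ - b * ‖ey₂‖), norm_nonneg ey₁, norm_nonneg ey₂,
          sq_nonneg a, sq_nonneg b, hy, mul_nonneg ha0 (norm_nonneg ey₂),
          mul_nonneg hb0 (norm_nonneg ey₁)]
      have hL : 0 ≤ a * ‖ey₂‖ + b * ‖ey₁‖ := by positivity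
      have h13 := Real.sqrt_le_sqrt hsq
      rwa [Real.sqrt_sq hL, Real.sqrt_mul (by positivity) (‖x‖ ^ 2),
        Real.sqrt_sq (norm_nonneg x)] at h13
    calc ‖(EuclideanSpace.equiv (Fin m) ℝ).symm
          (N *ᵥ ((S2 * V₂ᵀ - (S2 * Ω₂ * pinv) * V₁ᵀ) *ᵥ x))‖
        ≤ ‖N‖ * ‖(EuclideanSpace.equiv (Fin r) ℝ).symm
            ((S2 * V₂ᵀ - (S2 * Ω₂ * pinv) * V₁ᵀ) *ᵥ x)‖ := by
              have := Matrix.l2_opNorm_mulVec N ((EuclideanSpace.equiv (Fin r) ℝ).symm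
                ((S2 * V₂ᵀ - (S2 * Ω₂ * pinv) * V₁ᵀ) *ᵥ x)); exact this
      _ ≤ 1 * (a * ‖ey₂‖ + b * ‖ey₁‖) := by
          apply mul_le_mul hNle hstep1 (norm_nonneg _) zero_le_one
      _ = a * ‖ey₂‖ + b * ‖ey₁‖ := one_mul _
      _ ≤ Real.sqrt (a ^ 2 + b ^ 2) * ‖x‖ := hstep2
  calc ‖A - P * A‖ ^ 2 ≤ Real.sqrt (a ^ 2 + b ^ 2) ^ 2 :=
      pow_le_pow_left₀ (norm_nonneg _) hbound 2
    _ = a ^ 2 + b ^ 2 := Real.sq_sqrt (by positivity)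
end

section
/- Under the same setup, if Ω₁ has full row rank k, then ‖A − P_Y A‖_F² ≤ ‖Σ₂‖_F² + ‖Σ₂Ω₂Ω₁†‖_F², where ‖·‖_F is the Frobenius norm. -/
open Matrix
open scoped Matrix.Norms.L2Operator

/-- Frobenius norm squared as a trace. -/
private lemma frob_eq_trace' {m n : ℕ} (M : Matrix (Fin m) (Fin n) ℝ) :
    ∑ i, ∑ j, (M i j)^2 = (Mᵀ * M).trace := by
  rw [Matrix.trace]
  simp only [Matrix.diag, Matrix.mul_apply, Matrix.transpose_apply, sq]
  rw [Finset.sum_comm]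

private lemma frob_nonneg' {m n : ℕ} (M : Matrix (Fin m) (Fin n) ℝ) :
    0 ≤ ∑ i, ∑ j, (M i j)^2 :=
  Finset.sum_nonneg fun _ _ => Finset.sum_nonneg fun _ _ => sq_nonneg _

private lemma isUnit_det_of_rank' {k : ℕ} (M : Matrix (Fin k) (Fin k) ℝ) (h : M.rank = k) :
    IsUnit M.det := by
  rw [← Matrix.isUnit_iff_isUnit_det, ← Matrix.mulVec_surjective_iff_isUnit]
  have hr : LinearMap.range M.mulVecLin = ⊤ := by
    apply Submodule.eq_top_of_finrank_eq
    rw [Matrix.rank] at h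
    simp [h]
  intro v
  obtain ⟨w, hw⟩ := LinearMap.range_eq_top.mp hr v
  exact ⟨w, hw⟩

private lemma tr_help' {n a b c : ℕ}
    (Wa : Matrix (Fin n) (Fin a) ℝ) (Wb : Matrix (Fin n) (Fin b) ℝ)
    (X : Matrix (Fin c) (Fin a) ℝ) (Y : Matrix (Fin c) (Fin b) ℝ) :
    ((X * Waᵀ)ᵀ * (Y * Wbᵀ)).trace = ((Wbᵀ * Wa) * (Xᵀ * Y)).trace := by
  rw [Matrix.transpose_mul, Matrix.transpose_transpose,
    show Wa * Xᵀ * (Y * Wbᵀ) = (Wa * (Xᵀ * Y)) * Wbᵀ by simp only [Matrix.mul_assoc],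
    Matrix.trace_mul_comm]
  congr 1
  simp only [Matrix.mul_assoc]

set_option maxHeartbeats 2000000 in
/-- If `A = U·diag(σ)·Vᵀ` is an SVD with right singular blocks `V₁, V₂`,
`Y = AΩ`, `Ω₁ = V₁ᵀΩ`, `Ω₂ = V₂ᵀΩ`, `Ω₁` has full row rank `k`, and `P` is the orthogonal
projection onto the column space of `Y`, then
`‖A − P·A‖_F² ≤ ‖Σ₂‖_F² + ‖Σ₂·Ω₂·Ω₁†‖_F²` (Frobenius norms written as sums of squared entries), where `Ω₁† = Ω₁ᵀ(Ω₁Ω₁ᵀ)⁻¹`. -/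
theorem stmt_8 {m n k r ℓ : ℕ}
    (U : Matrix (Fin m) (Fin k ⊕ Fin r) ℝ) (V : Matrix (Fin n) (Fin k ⊕ Fin r) ℝ)
    (σ : Fin k ⊕ Fin r → ℝ)
    (hU : Uᵀ * U = 1) (hV : Vᵀ * V = 1)
    (hσ : ∀ a, 0 ≤ σ a)
    (hord : ∀ (i : Fin k) (j : Fin r), σ (Sum.inr j) ≤ σ (Sum.inl i))
    (A : Matrix (Fin m) (Fin n) ℝ) (hA : A = U * Matrix.diagonal σ * Vᵀ)
    (Ω : Matrix (Fin n) (Fin ℓ) ℝ)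
    (Ω₁ : Matrix (Fin k) (Fin ℓ) ℝ) (hΩ₁ : Ω₁ = (V.submatrix id Sum.inl)ᵀ * Ω)
    (Ω₂ : Matrix (Fin r) (Fin ℓ) ℝ) (hΩ₂ : Ω₂ = (V.submatrix id Sum.inr)ᵀ * Ω)
    (hrank : Ω₁.rank = k)
    (P : Matrix (Fin m) (Fin m) ℝ)
    (hPsymm : Pᵀ = P) (hPidem : P * P = P)
    (hPY : P * (A * Ω) = A * Ω)
    (hPrange : ∃ B : Matrix (Fin ℓ) (Fin m) ℝ, P = (A * Ω) * B) :
    (∑ i, ∑ j, ((A - P * A) i j) ^ 2) ≤ (∑ i, ∑ j, (Matrix.diagonal (σ ∘ Sum.inr) i j) ^ 2)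
      + ∑ i, ∑ j, ((Matrix.diagonal (σ ∘ Sum.inr) * Ω₂ * (Ω₁ᵀ * (Ω₁ * Ω₁ᵀ)⁻¹)) i j) ^ 2 := by
  set V₁ := V.submatrix id Sum.inl with hV₁def
  set V₂ := V.submatrix id Sum.inr with hV₂def
  set U₁ := U.submatrix id Sum.inl with hU₁def
  set U₂ := U.submatrix id Sum.inr with hU₂def
  set S1 := Matrix.diagonal (σ ∘ Sum.inl) with hS1def
  set S2 := Matrix.diagonal (σ ∘ Sum.inr) with hS2def
  set pinv := Ω₁ᵀ * (Ω₁ * Ω₁ᵀ)⁻¹ with hpinvdef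
  set G := S2 * Ω₂ * pinv with hGdef
  -- block identities for V and U
  have hVb : ∀ a b, ∑ x, V x a * V x b = if a = b then (1:ℝ) else 0 := fun a b => by
    have := congrFun (congrFun hV a) b
    simpa [Matrix.mul_apply, Matrix.one_apply] using this
  have hV12 : V₁ᵀ * V₂ = 0 := by
    ext a b
    simpa [Matrix.mul_apply, hV₁def, hV₂def] using hVb (Sum.inl a) (Sum.inr b)
  have hV11 : V₁ᵀ * V₁ = 1 := by
    ext a b
    simpa [Matrix.mul_apply, Matrix.one_apply, hV₁def] using hVb (Sum.inl a) (Sum.inl b)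
  have hV22 : V₂ᵀ * V₂ = 1 := by
    ext a b
    simpa [Matrix.mul_apply, Matrix.one_apply, hV₂def] using hVb (Sum.inr a) (Sum.inr b)
  have hU22 : U₂ᵀ * U₂ = 1 := by
    have hUb : ∀ a b, ∑ x, U x a * U x b = if a = b then (1:ℝ) else 0 := fun a b => by
      have := congrFun (congrFun hU a) b
      simpa [Matrix.mul_apply, Matrix.one_apply] using this
    ext a b
    simpa [Matrix.mul_apply, Matrix.one_apply, hU₂def] using hUb (Sum.inr a) (Sum.inr b)
  -- the split form of A
  have hAsplit : A = U₁ * S1 * V₁ᵀ + U₂ * S2 * V₂ᵀ := by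
    rw [hA]
    ext i j
    simp only [Matrix.mul_apply, Matrix.add_apply, Matrix.transpose_apply, Matrix.mul_diagonal,
      Fintype.sum_sum_type, Matrix.submatrix_apply, id, Function.comp, hU₁def, hU₂def,
      hV₁def, hV₂def, hS1def, hS2def]
    simp [Matrix.diagonal_apply, Sum.inl.injEq, Sum.inr.injEq,
      Finset.sum_ite_eq, mul_ite, ite_mul]
  have hV21 : V₂ᵀ * V₁ = 0 := by
    ext a b
    simpa [Matrix.mul_apply, hV₁def, hV₂def] using hVb (Sum.inr a) (Sum.inl b)
  -- Ω₁ has a right inverse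
  have hdet : IsUnit (Ω₁ * Ω₁ᵀ).det := by
    apply isUnit_det_of_rank'
    rw [Matrix.rank_self_mul_transpose, hrank]
  have hright : Ω₁ * pinv = 1 := by
    rw [hpinvdef, ← Matrix.mul_assoc, Matrix.mul_nonsing_inv _ hdet]
  -- the comparison matrix
  set C := pinv * V₁ᵀ with hCdef
  have hAΩ : A * Ω = U₁ * S1 * Ω₁ + U₂ * S2 * Ω₂ := by
    rw [hAsplit, hΩ₁, hΩ₂, Matrix.add_mul, Matrix.mul_assoc (U₁ * S1),
      Matrix.mul_assoc (U₂ * S2)]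
  have hYC : A * Ω * C = U₁ * S1 * V₁ᵀ + U₂ * G * V₁ᵀ := by
    rw [hAΩ, hCdef, hGdef, Matrix.add_mul]
    congr 1
    · rw [← Matrix.mul_assoc, Matrix.mul_assoc (U₁ * S1), hright, Matrix.mul_one]
    · simp only [Matrix.mul_assoc]
  set D := S2 * V₂ᵀ - G * V₁ᵀ with hDdef
  have hkey : A - A * Ω * C = U₂ * D := by
    rw [hYC, hAsplit, hDdef, Matrix.mul_sub]
    simp only [Matrix.mul_assoc]
    abel
  -- step 1: A - P*A = (1 - P) * (A - A*Ω*C)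
  have hPYC : P * (A * Ω * C) = A * Ω * C := by
    rw [show P * (A * Ω * C) = P * (A * Ω) * C from (Matrix.mul_assoc _ _ _).symm, hPY]
  have hstep1 : A - P * A = (1 - P) * (A - A * Ω * C) := by
    rw [Matrix.sub_mul, Matrix.one_mul, Matrix.mul_sub, hPYC]
    abel
  -- step 2: projection contraction in Frobenius norm
  have hstep2 : ∀ B : Matrix (Fin m) (Fin n) ℝ,
      ∑ i, ∑ j, ((((1 : Matrix (Fin m) (Fin m) ℝ) - P) * B) i j)^2
        ≤ ∑ i, ∑ j, (B i j)^2 := by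
    intro B
    have h1 : (1 - P)ᵀ * (1 - P) = 1 - P := by
      rw [Matrix.transpose_sub, Matrix.transpose_one, hPsymm, Matrix.sub_mul,
        Matrix.mul_sub, Matrix.mul_sub, hPidem]
      simp
    have hQQ : ((1 - P) * B)ᵀ * ((1 - P) * B) = Bᵀ * B - Bᵀ * (P * B) := by
      calc ((1 - P) * B)ᵀ * ((1 - P) * B)
          = Bᵀ * (((1 - P)ᵀ * (1 - P)) * B) := by
            rw [Matrix.transpose_mul]; simp only [Matrix.mul_assoc]
        _ = Bᵀ * ((1 - P) * B) := by rw [h1]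
        _ = Bᵀ * B - Bᵀ * (P * B) := by
            rw [Matrix.sub_mul, Matrix.one_mul, Matrix.mul_sub]
    have hPB : Bᵀ * (P * B) = (P * B)ᵀ * (P * B) := by
      have h2 : Pᵀ * (P * B) = P * B := by rw [hPsymm, ← Matrix.mul_assoc, hPidem]
      rw [Matrix.transpose_mul, Matrix.mul_assoc, h2]
    rw [frob_eq_trace', frob_eq_trace', hQQ, Matrix.trace_sub, hPB]
    have := frob_nonneg' (P * B)
    rw [frob_eq_trace'] at this
    linarith
  -- step 3: exact computation of the Frobenius norm of U₂ * D
  have hSV : ∑ i, ∑ j, ((U₂ * D) i j)^2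
      = (∑ i, ∑ j, (S2 i j)^2) + ∑ i, ∑ j, (G i j)^2 := by
    rw [frob_eq_trace', frob_eq_trace', frob_eq_trace']
    have hUU : (U₂ * D)ᵀ * (U₂ * D) = Dᵀ * D := by
      rw [Matrix.transpose_mul, Matrix.mul_assoc, ← Matrix.mul_assoc U₂ᵀ U₂ D, hU22,
        Matrix.one_mul]
    rw [hUU, hDdef]
    have hexp : (S2 * V₂ᵀ - G * V₁ᵀ)ᵀ * (S2 * V₂ᵀ - G * V₁ᵀ)
        = (S2 * V₂ᵀ)ᵀ * (S2 * V₂ᵀ) - (S2 * V₂ᵀ)ᵀ * (G * V₁ᵀ)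
          - (G * V₁ᵀ)ᵀ * (S2 * V₂ᵀ) + (G * V₁ᵀ)ᵀ * (G * V₁ᵀ) := by
      rw [Matrix.transpose_sub, Matrix.sub_mul, Matrix.mul_sub, Matrix.mul_sub]
      abel
    rw [hexp, Matrix.trace_add, Matrix.trace_sub, Matrix.trace_sub]
    have h1 : ((S2 * V₂ᵀ)ᵀ * (S2 * V₂ᵀ)).trace = (S2ᵀ * S2).trace := by
      rw [tr_help', hV22, Matrix.one_mul]
    have h2 : ((S2 * V₂ᵀ)ᵀ * (G * V₁ᵀ)).trace = 0 := by
      rw [tr_help', hV12, Matrix.zero_mul, Matrix.trace_zero]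
    have h3 : ((G * V₁ᵀ)ᵀ * (S2 * V₂ᵀ)).trace = 0 := by
      rw [tr_help', hV21, Matrix.zero_mul, Matrix.trace_zero]
    have h4 : ((G * V₁ᵀ)ᵀ * (G * V₁ᵀ)).trace = (Gᵀ * G).trace := by
      rw [tr_help', hV11, Matrix.one_mul]
    rw [h1, h2, h3, h4]
    ring
  calc ∑ i, ∑ j, ((A - P * A) i j)^2
      = ∑ i, ∑ j, ((((1 : Matrix (Fin m) (Fin m) ℝ) - P) * (A - A * Ω * C)) i j)^2 := by
        rw [hstep1]
    _ ≤ ∑ i, ∑ j, ((A - A * Ω * C) i j)^2 := hstep2 _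
    _ = ∑ i, ∑ j, ((U₂ * D) i j)^2 := by rw [hkey]
    _ = (∑ i, ∑ j, (S2 i j)^2) + ∑ i, ∑ j, (G i j)^2 := hSV
end

section
/- Let s* ∈ ℝⁿ (n ≥ 2) be nonnegative leverage scores summing to k with maximum entry ‖s*‖_∞ > 0 attained at index j, and let γ > 1. Define s by s_j = ‖s*‖_∞/γ and s_i = s*_i + (1 − γ^{-1})·‖s*‖_∞/(n−1) for i ≠ j. Then ∑_i s_i = k, s*_i ≤ γ·s_i for all i, and q(s) = max_i sqrt(s*_i)/s_i ≤ max( γ/sqrt(‖s*‖_∞), (n−1)/(sqrt(‖s*‖_∞)·(1 − γ^{-1})) ). -/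
/-- The explicit construction `s_j = ‖s*‖_∞/γ`,
`s_i = s*_i + (1−γ⁻¹)·‖s*‖_∞/(n−1)` for `i ≠ j` is feasible for the constrained problem,
sums to `k`, and its `q`-value is at most
`max(γ/sqrt(‖s*‖_∞), (n−1)/(sqrt(‖s*‖_∞)·(1−γ⁻¹)))`. -/
theorem stmt_14 {n : ℕ} (hn : 2 ≤ n) (k γ : ℝ) (hγ : 1 < γ)
    (sStar : Fin n → ℝ) (hpos : ∀ i, 0 ≤ sStar i) (hsum : ∑ i, sStar i = k)
    (j : Fin n) (hj : ∀ i, sStar i ≤ sStar j) (hjpos : 0 < sStar j)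
    (s : Fin n → ℝ)
    (hdef : s = fun i => if i = j then sStar j / γ
      else sStar i + (1 - γ⁻¹) * sStar j / ((n : ℝ) - 1)) :
    (∑ i, s i = k) ∧ (∀ i, sStar i ≤ γ * s i) ∧
    (Finset.univ.sup' ⟨j, Finset.mem_univ j⟩ fun i => Real.sqrt (sStar i) / s i)
      ≤ max (γ / Real.sqrt (sStar j))
            (((n : ℝ) - 1) / (Real.sqrt (sStar j) * (1 - γ⁻¹))) := by
  have hγ0 : (0:ℝ) < γ := lt_trans one_pos hγ
  have hγinv : γ⁻¹ < 1 := inv_lt_one_of_one_lt₀ hγ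
  have hfrac : (0:ℝ) < 1 - γ⁻¹ := by linarith
  have hn1 : (0:ℝ) < (n:ℝ) - 1 := by
    have : (2:ℝ) ≤ n := by exact_mod_cast hn
    linarith
  set c : ℝ := (1 - γ⁻¹) * sStar j / ((n : ℝ) - 1) with hc
  have hcpos : 0 < c := div_pos (mul_pos hfrac hjpos) hn1
  have hcardR : ((Finset.univ.erase j).card : ℝ) = (n:ℝ) - 1 := by
    have h1 : 1 ≤ n := le_trans one_le_two hn
    have : (Finset.univ.erase j).card = n - 1 := by
      simp [Finset.card_erase_of_mem]
    rw [this]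
    push_cast [h1]
    ring
  refine ⟨?_, ?_, ?_⟩
  · -- sum
    rw [← Finset.add_sum_erase _ _ (Finset.mem_univ j)]
    have h1 : s j = sStar j / γ := by simp [hdef]
    have h2 : ∑ i ∈ Finset.univ.erase j, s i
        = ∑ i ∈ Finset.univ.erase j, (sStar i + c) := by
      apply Finset.sum_congr rfl
      intro i hi
      have : i ≠ j := Finset.ne_of_mem_erase hi
      simp [hdef, this]
    rw [h1, h2, Finset.sum_add_distrib, Finset.sum_const, nsmul_eq_mul, hcardR]
    have hS : ∑ i ∈ Finset.univ.erase j, sStar i = k - sStar j := by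
      have := Finset.add_sum_erase _ sStar (Finset.mem_univ j)
      rw [hsum] at this; linarith
    rw [hS, hc]
    field_simp
    ring
  · -- feasibility
    intro i
    by_cases h : i = j
    · subst h
      have : s i = sStar i / γ := by simp [hdef]
      rw [this, mul_div_cancel₀ _ (ne_of_gt hγ0)]
    · have hs : s i = sStar i + c := by simp [hdef, h]
      rw [hs]
      have h1 : sStar i ≤ γ * sStar i := le_mul_of_one_le_left (hpos i) hγ.le
      nlinarith [mul_pos hγ0 hcpos]
  · -- q bound
    apply Finset.sup'_le
    intro i _
    have hsqj : 0 < Real.sqrt (sStar j) := Real.sqrt_pos.mpr hjpos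
    have hsj : Real.sqrt (sStar j) * Real.sqrt (sStar j) = sStar j :=
      Real.mul_self_sqrt hjpos.le
    by_cases h : i = j
    · subst h
      have hs : s i = sStar i / γ := by simp [hdef]
      rw [hs]
      refine le_trans (le_of_eq ?_) (le_max_left _ _)
      rw [div_div_eq_mul_div, eq_div_iff (ne_of_gt hsqj)]
      field_simp
      linear_combination hsj
    · have hs : s i = sStar i + c := by simp [hdef, h]
      rw [hs]
      refine le_trans ?_ (le_max_right _ _)
      have hb : Real.sqrt (sStar i) / (sStar i + c) ≤ Real.sqrt (sStar j) / c := by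
        apply div_le_div₀ (Real.sqrt_nonneg _) (Real.sqrt_le_sqrt (hj i)) hcpos
        linarith [hpos i]
      refine le_trans hb (le_of_eq ?_)
      have hnc : ((n:ℝ)-1) * c = (1-γ⁻¹) * sStar j := by
        rw [hc]; field_simp
      rw [div_eq_div_iff hcpos.ne' (mul_pos hsqj hfrac).ne', hnc]
      linear_combination (1-γ⁻¹) * hsj
end
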